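/- For vectors x, y ∈ ℂⁿ, the nuclear norm of the difference of the rank-one Hermitian matrices x x* and y y* satisfies ‖x x* − y y*‖₁ = sqrt((‖x‖₂² + ‖y‖₂²)² − 4 |⟨x,y⟩_ℂ|²), i.e. it equals d(x,y) = min_{u∈U(1)} ‖x − u y‖₂·‖x + u y‖₂. Equivalently, the eigenvalues of x x* − y y* other than zero are λ_± = (1/2)(‖x‖₂² − ‖y‖₂² ± sqrt((‖x‖₂²+‖y‖₂²)² − 4|⟨x,y⟩_ℂ|²)). -/

import Mathlib

open Matrix Filter
open scoped ComplexOrder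

noncomputable def frob {p q : ℕ} (x : Matrix (Fin p) (Fin q) ℂ) : ℝ :=
  Real.sqrt (Matrix.trace (xᴴ * x)).re

noncomputable def rinner {p q : ℕ} (X Y : Matrix (Fin p) (Fin q) ℂ) : ℝ :=
  (Matrix.trace (Xᴴ * Y)).re

/-- The positive semidefinite square root of a positive semidefinite matrix, as
`Matrix.PosSemidef.sqrt` was defined in the older Mathlib. -/
noncomputable def posSemidefSqrtOld {m : Type*} [Fintype m] [DecidableEq m] {A : Matrix m m ℂ}
    (hA : A.PosSemidef) : Matrix m m ℂ :=
  hA.1.eigenvectorUnitary.1 * diagonal ((↑) ∘ (√·) ∘ hA.1.eigenvalues) *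
    (star hA.1.eigenvectorUnitary : Matrix m m ℂ)

noncomputable def nuclear {p q : ℕ} (x : Matrix (Fin p) (Fin q) ℂ) : ℝ :=
  (Matrix.trace (posSemidefSqrtOld (Matrix.posSemidef_conjTranspose_mul_self x))).re

noncomputable def theta {n r : ℕ} (x : Matrix (Fin n) (Fin r) ℂ) : Matrix (Fin n) (Fin n) ℂ :=
  posSemidefSqrtOld (Matrix.posSemidef_self_mul_conjTranspose x)

noncomputable def psi {n r : ℕ} (x : Matrix (Fin n) (Fin r) ℂ) : Matrix (Fin n) (Fin n) ℂ :=
  frob x • theta x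

noncomputable def Dmet {n r : ℕ} (x y : Matrix (Fin n) (Fin r) ℂ) : ℝ :=
  ⨅ U : Matrix.unitaryGroup (Fin r) ℂ, frob (x - y * (U : Matrix (Fin r) (Fin r) ℂ))

noncomputable def dmet {n r : ℕ} (x y : Matrix (Fin n) (Fin r) ℂ) : ℝ :=
  ⨅ U : Matrix.unitaryGroup (Fin r) ℂ,
    frob (x - y * (U : Matrix (Fin r) (Fin r) ℂ)) * frob (x + y * (U : Matrix (Fin r) (Fin r) ℂ))


section AuxNRD

open Complex

open scoped MatrixOrder in
lemma eq_sqrtOld {n : ℕ} {A S : Matrix (Fin n) (Fin n) ℂ} (hA : A.PosSemidef) (hS : S.PosSemidef)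
    (h : S ^ 2 = A) : S = posSemidefSqrtOld hA := by
  have e1 : posSemidefSqrtOld hA = cfc Real.sqrt A := by
    rw [hA.1.cfc_eq]; rfl
  rw [e1, ← cfcₙ_eq_cfc, ← CFC.sqrt_eq_real_sqrt A hA.nonneg]
  exact (CFC.sqrt_unique (by rw [← h, pow_two]) hS.nonneg).symm

lemma vmv_mul {n : ℕ} (u v w z : Fin n → ℂ) :
    vecMulVec u v * vecMulVec w z = (v ⬝ᵥ w) • vecMulVec u z := by
  ext i j
  simp only [Matrix.mul_apply, vecMulVec_apply, Matrix.smul_apply, smul_eq_mul, dotProduct,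
    Finset.sum_mul]
  exact Finset.sum_congr rfl fun k _ => by ring

lemma vmv_mulVec {n : ℕ} (u w v : Fin n → ℂ) :
    vecMulVec u w *ᵥ v = (w ⬝ᵥ v) • u := by
  ext i
  simp only [Matrix.mulVec, dotProduct, vecMulVec_apply, Pi.smul_apply, smul_eq_mul,
    Finset.sum_mul]
  exact Finset.sum_congr rfl fun k _ => by ring

lemma vmv_conjT {n : ℕ} (u v : Fin n → ℂ) :
    (vecMulVec u v)ᴴ = vecMulVec (star v) (star u) := by
  ext i j
  simp [vecMulVec_apply, Matrix.conjTranspose_apply, mul_comm]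

lemma trace_vmv {n : ℕ} (u v : Fin n → ℂ) : Matrix.trace (vecMulVec u v) = u ⬝ᵥ v := by
  simp [Matrix.trace, vecMulVec_apply, dotProduct, Matrix.diag]

lemma dot_star_self {n : ℕ} (x : Fin n → ℂ) :
    star x ⬝ᵥ x = ((∑ i, Complex.normSq (x i) : ℝ) : ℂ) := by
  push_cast
  simp [dotProduct, Complex.normSq_eq_conj_mul_self]

lemma self_dot_star {n : ℕ} (x : Fin n → ℂ) :
    x ⬝ᵥ star x = ((∑ i, Complex.normSq (x i) : ℝ) : ℂ) := by
  rw [dotProduct_comm, dot_star_self]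

lemma star_dot_comm {n : ℕ} (x y : Fin n → ℂ) :
    star y ⬝ᵥ x = starRingEnd ℂ (star x ⬝ᵥ y) := by
  simp only [dotProduct, map_sum, _root_.map_mul, Pi.star_apply, Complex.star_def,
    Complex.conj_conj]
  exact Finset.sum_congr rfl fun k _ => mul_comm _ _

lemma cs {n : ℕ} (x y : Fin n → ℂ) :
    Complex.normSq (star x ⬝ᵥ y) ≤ (∑ i, Complex.normSq (x i)) * (∑ i, Complex.normSq (y i)) := by
  set X : EuclideanSpace ℂ (Fin n) := (WithLp.equiv 2 (Fin n → ℂ)).symm x with hX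
  set Y : EuclideanSpace ℂ (Fin n) := (WithLp.equiv 2 (Fin n → ℂ)).symm y with hY
  have h := @norm_inner_le_norm ℂ (EuclideanSpace ℂ (Fin n)) _ _ _ X Y
  rw [EuclideanSpace.inner_eq_star_dotProduct] at h
  have hx : ‖X‖ ^ 2 = ∑ i, Complex.normSq (x i) := by
    rw [EuclideanSpace.norm_eq, Real.sq_sqrt (by positivity)]
    simp [hX, Complex.sq_norm]
  have hy : ‖Y‖ ^ 2 = ∑ i, Complex.normSq (y i) := by
    rw [EuclideanSpace.norm_eq, Real.sq_sqrt (by positivity)]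
    simp [hY, Complex.sq_norm]
  have h2 := mul_self_le_mul_self (norm_nonneg _) h
  have hXY : Y.ofLp ⬝ᵥ star X.ofLp
      = star x ⬝ᵥ y := by rw [dotProduct_comm]; simp [hX, hY]
  rw [hXY] at h2
  calc Complex.normSq (star x ⬝ᵥ y) = ‖star x ⬝ᵥ y‖ * ‖star x ⬝ᵥ y‖ := by
        rw [← Complex.sq_norm, sq]
    _ ≤ ‖X‖ * ‖Y‖ * (‖X‖ * ‖Y‖) := h2
    _ = ‖X‖ ^ 2 * ‖Y‖ ^ 2 := by ring
    _ = _ := by rw [hx, hy]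

lemma key_alg {n : ℕ} (x y : Fin n → ℂ) (a b : ℝ) (c : ℂ)
    (hxx : star x ⬝ᵥ x = (a:ℂ)) (hyy : star y ⬝ᵥ y = (b:ℂ))
    (hxy : star x ⬝ᵥ y = c) (hyx : star y ⬝ᵥ x = (starRingEnd ℂ) c) :
    (((a:ℂ)+b) • (vecMulVec x (star x) + vecMulVec y (star y)) - (2*c) • vecMulVec x (star y)
        - (2*(starRingEnd ℂ) c) • vecMulVec y (star x)) *
      (((a:ℂ)+b) • (vecMulVec x (star x) + vecMulVec y (star y)) - (2*c) • vecMulVec x (star y)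
        - (2*(starRingEnd ℂ) c) • vecMulVec y (star x))
      = (((a:ℂ)+b)^2 - 4*(c*(starRingEnd ℂ) c)) •
        ((vecMulVec x (star x) - vecMulVec y (star y)) *
         (vecMulVec x (star x) - vecMulVec y (star y))) := by
  simp only [Matrix.sub_mul, Matrix.mul_sub, Matrix.add_mul, Matrix.mul_add, Matrix.smul_mul,
    Matrix.mul_smul, vmv_mul, hxx, hyy, hxy, hyx, smul_smul, smul_sub, smul_add]
  match_scalars <;> ring

lemma nuclear_core {n : ℕ} (x y : Fin n → ℂ) :
    nuclear (Matrix.vecMulVec x (star x) - Matrix.vecMulVec y (star y)) =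
      Real.sqrt (((∑ i, Complex.normSq (x i)) + ∑ i, Complex.normSq (y i)) ^ 2
        - 4 * Complex.normSq (star x ⬝ᵥ y)) := by
  set a := ∑ i, Complex.normSq (x i) with ha
  set b := ∑ i, Complex.normSq (y i) with hb
  set c := star x ⬝ᵥ y with hc
  have ha0 : 0 ≤ a := Finset.sum_nonneg fun i _ => Complex.normSq_nonneg _
  have hb0 : 0 ≤ b := Finset.sum_nonneg fun i _ => Complex.normSq_nonneg _
  have hcs : Complex.normSq c ≤ a * b := cs x y
  set dsq := (a + b)^2 - 4 * Complex.normSq c with hdsq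
  have hdsq0 : 0 ≤ dsq := by nlinarith [sq_nonneg (a - b), Complex.normSq_nonneg c]
  set M := Matrix.vecMulVec x (star x) - Matrix.vecMulVec y (star y) with hM
  have hxx : star x ⬝ᵥ x = (a:ℂ) := dot_star_self x
  have hyy : star y ⬝ᵥ y = (b:ℂ) := dot_star_self y
  have hyx : star y ⬝ᵥ x = (starRingEnd ℂ) c := star_dot_comm x y
  have hherm : Mᴴ = M := by
    rw [hM]
    simp [Matrix.conjTranspose_sub, vmv_conjT]
  have hMM : M * M = (a:ℂ) • vecMulVec x (star x) + (b:ℂ) • vecMulVec y (star y)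
      - c • vecMulVec x (star y) - (starRingEnd ℂ) c • vecMulVec y (star x) := by
    rw [hM]
    simp only [Matrix.sub_mul, Matrix.mul_sub, vmv_mul, hxx, hyy, ← hc, hyx]
    module
  have h1 : x ⬝ᵥ star x = (a:ℂ) := self_dot_star x
  have h2 : y ⬝ᵥ star y = (b:ℂ) := self_dot_star y
  have h3 : x ⬝ᵥ star y = (starRingEnd ℂ) c := by rw [dotProduct_comm, hyx]
  have h4 : y ⬝ᵥ star x = c := by rw [dotProduct_comm, ← hc]
  have hccbar : (starRingEnd ℂ) c * c = ((Complex.normSq c : ℝ) : ℂ) := by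
    rw [mul_comm, Complex.mul_conj]
  rcases eq_or_lt_of_le hdsq0 with hzero | hpos
  · -- degenerate case : M = 0
    have htr1 : Matrix.trace (M * M) = ((a^2 + b^2 - 2*Complex.normSq c : ℝ) : ℂ) := by
      rw [hMM]
      simp only [Matrix.trace_sub, Matrix.trace_add, Matrix.trace_smul]
      rw [show Matrix.trace (vecMulVec x (star x)) = (a:ℂ) from (trace_vmv _ _).trans h1,
        show Matrix.trace (vecMulVec y (star y)) = (b:ℂ) from (trace_vmv _ _).trans h2,
        show Matrix.trace (vecMulVec x (star y)) = (starRingEnd ℂ) c from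
          (trace_vmv _ _).trans h3,
        show Matrix.trace (vecMulVec y (star x)) = c from (trace_vmv _ _).trans h4]
      simp only [smul_eq_mul, Complex.mul_conj, hccbar]
      push_cast
      ring
    have htr2 : (Matrix.trace (M * M)).re = ∑ j, ∑ i, Complex.normSq (M i j) := by
      rw [show M * M = Mᴴ * M by rw [hherm]]
      simp only [Matrix.trace, Matrix.diag, Matrix.mul_apply, Matrix.conjTranspose_apply]
      rw [Complex.re_sum]
      refine Finset.sum_congr rfl fun j _ => ?_
      rw [Complex.re_sum]
      refine Finset.sum_congr rfl fun i _ => ?_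
      rw [Complex.star_def, mul_comm, Complex.mul_conj, Complex.ofReal_re]
    have hval : a^2 + b^2 - 2*Complex.normSq c = 0 := by nlinarith [sq_nonneg (a-b)]
    have hsum0 : ∑ j, ∑ i, Complex.normSq (M i j) = 0 := by
      rw [← htr2, htr1, hval]
      simp
    have hMz : M = 0 := by
      ext i j
      have hj := (Finset.sum_eq_zero_iff_of_nonneg (fun j _ =>
        Finset.sum_nonneg fun i _ => Complex.normSq_nonneg _)).mp hsum0 j (Finset.mem_univ j)
      have hi := (Finset.sum_eq_zero_iff_of_nonneg (fun i _ =>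
        Complex.normSq_nonneg _)).mp hj i (Finset.mem_univ i)
      simpa [Complex.normSq_eq_zero] using hi
    have hz : (0 : Matrix (Fin n) (Fin n) ℂ)
        = posSemidefSqrtOld (Matrix.posSemidef_conjTranspose_mul_self
            (0 : Matrix (Fin n) (Fin n) ℂ)) :=
      eq_sqrtOld _ Matrix.PosSemidef.zero (by simp)
    rw [hMz]
    unfold nuclear
    rw [← hz, ← hzero, Real.sqrt_zero]
    simp
  · -- nondegenerate case
    set D := Real.sqrt dsq with hD
    have hDpos : 0 < D := Real.sqrt_pos.mpr hpos
    have hD2 : D^2 = dsq := Real.sq_sqrt hdsq0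
    have hcastd : ((dsq : ℝ) : ℂ) = ((a:ℂ)+b)^2 - 4*(c*(starRingEnd ℂ) c) := by
      rw [hdsq, Complex.mul_conj]
      push_cast
      ring
    set T := (((a:ℝ):ℂ)+(b:ℝ)) • (vecMulVec x (star x) + vecMulVec y (star y))
        - (2*c) • vecMulVec x (star y)
        - (2*(starRingEnd ℂ) c) • vecMulVec y (star x) with hT
    have hTT : T * T = ((dsq:ℝ):ℂ) • (M * M) := by
      rw [hT, hM, hcastd]
      exact key_alg x y a b c hxx hyy hc.symm hyx
    set S := ((D⁻¹ : ℝ) : ℂ) • T with hS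
    have hThm : Tᴴ = T := by
      rw [hT]
      simp only [Matrix.conjTranspose_sub, Matrix.conjTranspose_add, Matrix.conjTranspose_smul,
        vmv_conjT, star_star]
      rw [show star (((a:ℝ):ℂ)+(b:ℝ)) = ((a:ℝ):ℂ)+(b:ℝ) by
          simp [Complex.star_def, Complex.conj_ofReal],
        show star (2*c) = 2*(starRingEnd ℂ) c by simp [Complex.star_def],
        show star (2*(starRingEnd ℂ) c) = 2*c by simp [Complex.star_def]]
      abel
    have hQ : ∀ v : Fin n → ℂ, star v ⬝ᵥ (T *ᵥ v) =
        (((a+b) * (Complex.normSq (star x ⬝ᵥ v) + Complex.normSq (star y ⬝ᵥ v))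
          - 4 * ((c * (star y ⬝ᵥ v)) * (starRingEnd ℂ) (star x ⬝ᵥ v)).re : ℝ) : ℂ) := by
      intro v
      have hvx : star v ⬝ᵥ x = (starRingEnd ℂ) (star x ⬝ᵥ v) := star_dot_comm x v
      have hvy : star v ⬝ᵥ y = (starRingEnd ℂ) (star y ⬝ᵥ v) := star_dot_comm y v
      rw [hT]
      simp only [Matrix.sub_mulVec, Matrix.add_mulVec, Matrix.smul_mulVec, vmv_mulVec,
        dotProduct_sub, dotProduct_smul, dotProduct_add, hvx, hvy, smul_eq_mul]
      set p := star x ⬝ᵥ v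
      set q := star y ⬝ᵥ v
      have e1 : (Complex.normSq p : ℝ) = (p * (starRingEnd ℂ) p : ℂ).re := by
        rw [Complex.mul_conj, Complex.ofReal_re]
      have hre : ((c * q * (starRingEnd ℂ) p).re : ℂ) * 2
          = c * q * (starRingEnd ℂ) p + (starRingEnd ℂ) c * p * (starRingEnd ℂ) q := by
        have hadd := Complex.add_conj (c * q * (starRingEnd ℂ) p)
        rw [show (starRingEnd ℂ) (c * q * (starRingEnd ℂ) p)
            = (starRingEnd ℂ) c * p * (starRingEnd ℂ) q by
          simp only [_root_.map_mul, Complex.conj_conj]; ring] at hadd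
        push_cast at hadd
        linear_combination -hadd
      push_cast
      rw [← Complex.mul_conj p, ← Complex.mul_conj q]
      linear_combination (2:ℂ) * hre
    have hSpsd : S.PosSemidef := by
      refine Matrix.PosSemidef.of_dotProduct_mulVec_nonneg ?_ ?_
      · show Sᴴ = S
        rw [hS, Matrix.conjTranspose_smul, hThm]
        congr 1
        simp [Complex.star_def, Complex.conj_ofReal]
      · intro v
        rw [hS, Matrix.smul_mulVec, dotProduct_smul, hQ v, smul_eq_mul,
          ← Complex.ofReal_mul, Complex.zero_le_real]
        set p := star x ⬝ᵥ v
        set q := star y ⬝ᵥ v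
        have h2c : 2 * ‖c‖ ≤ a + b := by
          nlinarith [Complex.sq_norm c, norm_nonneg c, sq_nonneg (a - b),
            sq_nonneg (a + b - 2 * ‖c‖), sq_nonneg (a + b + 2 * ‖c‖)]
        have habs : ((c * q) * (starRingEnd ℂ) p).re
            ≤ ‖c‖ * (‖q‖ * ‖p‖) := by
          calc ((c * q) * (starRingEnd ℂ) p).re ≤ ‖(c * q) * (starRingEnd ℂ) p‖ :=
                Complex.re_le_norm _
            _ = ‖c‖ * (‖q‖ * ‖p‖) := by
                simp [_root_.map_mul, mul_assoc]
        have hnn : 0 ≤ (a+b) * (Complex.normSq p + Complex.normSq q)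
            - 4 * ((c * q) * (starRingEnd ℂ) p).re := by
          have t1 : 0 ≤ (a+b) * ((‖p‖ - ‖q‖)^2) :=
            mul_nonneg (by linarith) (sq_nonneg _)
          have t2 : 0 ≤ (‖p‖ * ‖q‖) * (a + b - 2 * ‖c‖) :=
            mul_nonneg (mul_nonneg (norm_nonneg _) (norm_nonneg _))
              (by linarith)
          nlinarith [Complex.sq_norm p, Complex.sq_norm q]
        exact mul_nonneg (inv_nonneg.mpr hDpos.le) hnn
    have hSsq : S ^ 2 = (M)ᴴ * M := by
      rw [pow_two, hS, Matrix.smul_mul, Matrix.mul_smul, smul_smul, hTT, smul_smul, hherm]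
      rw [show ((D⁻¹:ℝ):ℂ) * ((D⁻¹:ℝ):ℂ) * ((dsq:ℝ):ℂ) = 1 by
        push_cast
        rw [← hD2, Complex.ofReal_pow]
        field_simp]
      rw [one_smul]
    have hSeq : S = posSemidefSqrtOld (Matrix.posSemidef_conjTranspose_mul_self M) :=
      eq_sqrtOld _ hSpsd hSsq
    have htrT : Matrix.trace T = ((dsq:ℝ):ℂ) := by
      rw [hT]
      simp only [Matrix.trace_sub, Matrix.trace_add, Matrix.trace_smul]
      rw [show Matrix.trace (vecMulVec x (star x)) = (a:ℂ) from (trace_vmv _ _).trans h1,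
        show Matrix.trace (vecMulVec y (star y)) = (b:ℂ) from (trace_vmv _ _).trans h2,
        show Matrix.trace (vecMulVec x (star y)) = (starRingEnd ℂ) c from
          (trace_vmv _ _).trans h3,
        show Matrix.trace (vecMulVec y (star x)) = c from (trace_vmv _ _).trans h4,
        hcastd]
      simp only [smul_eq_mul]
      ring
    unfold nuclear
    rw [← hSeq, hS, Matrix.trace_smul, htrT, smul_eq_mul, ← Complex.ofReal_mul,
      Complex.ofReal_re, ← hD2]
    rw [hD]
    field_simp
lemma inf_core {n : ℕ} (x y : Fin n → ℂ) :
    (⨅ u : {c : ℂ // ‖c‖ = 1},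
        Real.sqrt (∑ i, Complex.normSq (x i - u.1 * y i)) *
        Real.sqrt (∑ i, Complex.normSq (x i + u.1 * y i)))
    = Real.sqrt (((∑ i, Complex.normSq (x i)) + ∑ i, Complex.normSq (y i)) ^ 2
        - 4 * Complex.normSq (star x ⬝ᵥ y)) := by
  set a := ∑ i, Complex.normSq (x i) with ha
  set b := ∑ i, Complex.normSq (y i) with hb
  set c := star x ⬝ᵥ y with hc
  have ha0 : 0 ≤ a := Finset.sum_nonneg fun i _ => Complex.normSq_nonneg _
  have hb0 : 0 ≤ b := Finset.sum_nonneg fun i _ => Complex.normSq_nonneg _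
  have hcs : Complex.normSq c ≤ a * b := cs x y
  have h2c : 2 * ‖c‖ ≤ a + b := by
    nlinarith [Complex.sq_norm c, norm_nonneg c, sq_nonneg (a - b),
      sq_nonneg (a + b - 2 * ‖c‖), sq_nonneg (a + b + 2 * ‖c‖)]
  have hxsy : ∑ i, x i * (starRingEnd ℂ) (y i) = (starRingEnd ℂ) c := by
    rw [hc]
    simp only [dotProduct, map_sum, _root_.map_mul, Pi.star_apply, Complex.star_def,
      Complex.conj_conj]
  have hsums : ∀ u : ℂ, ‖u‖ = 1 →
      (∑ i, Complex.normSq (x i - u * y i) = a + b - 2*(u*c).re ∧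
       ∑ i, Complex.normSq (x i + u * y i) = a + b + 2*(u*c).re) := by
    intro u hu
    have hnsu : Complex.normSq u = 1 := by rw [← Complex.sq_norm, hu]; norm_num
    have hcross : ∑ i, (x i * (starRingEnd ℂ) (u * y i)).re = (u*c).re := by
      rw [← Complex.re_sum]
      have : ∑ i, x i * (starRingEnd ℂ) (u * y i)
          = (starRingEnd ℂ) u * ∑ i, x i * (starRingEnd ℂ) (y i) := by
        rw [Finset.mul_sum]
        exact Finset.sum_congr rfl fun i _ => by rw [_root_.map_mul]; ring
      rw [this, hxsy, ← _root_.map_mul, Complex.conj_re]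
    constructor
    · simp only [Complex.normSq_sub, _root_.map_mul Complex.normSq, hnsu, one_mul,
        Finset.sum_sub_distrib, Finset.sum_add_distrib, ← Finset.mul_sum, hcross, ← ha, ← hb]
    · simp only [Complex.normSq_add, _root_.map_mul Complex.normSq, hnsu, one_mul,
        Finset.sum_add_distrib, ← Finset.mul_sum, hcross, ← ha, ← hb]
  have hval : ∀ u : ℂ, ‖u‖ = 1 →
      Real.sqrt (∑ i, Complex.normSq (x i - u * y i)) *
        Real.sqrt (∑ i, Complex.normSq (x i + u * y i))
      = Real.sqrt ((a+b)^2 - 4*((u*c).re)^2) := by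
    intro u hu
    obtain ⟨h1, h2⟩ := hsums u hu
    have hr : |(u*c).re| ≤ ‖c‖ := by
      calc |(u*c).re| ≤ ‖u*c‖ := Complex.abs_re_le_norm _
        _ = ‖c‖ := by rw [norm_mul, hu, one_mul]
    have hge : 0 ≤ a + b - 2*(u*c).re := by
      cases' abs_le.mp hr with hr1 hr2; linarith
    rw [h1, h2, ← Real.sqrt_mul hge]
    congr 1
    ring
  have hDle : ∀ u : ℂ, ‖u‖ = 1 →
      Real.sqrt ((a+b)^2 - 4*Complex.normSq c)
        ≤ Real.sqrt ((a+b)^2 - 4*((u*c).re)^2) := by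
    intro u hu
    apply Real.sqrt_le_sqrt
    have hr : |(u*c).re| ≤ ‖c‖ := by
      calc |(u*c).re| ≤ ‖u*c‖ := Complex.abs_re_le_norm _
        _ = ‖c‖ := by rw [norm_mul, hu, one_mul]
    have : ((u*c).re)^2 ≤ Complex.normSq c := by
      rw [← Complex.sq_norm, ← _root_.sq_abs ((u*c).re)]
      exact pow_le_pow_left₀ (abs_nonneg _) hr 2
    linarith
  haveI : Nonempty {c : ℂ // ‖c‖ = 1} := ⟨⟨1, by simp⟩⟩
  apply le_antisymm
  · -- inf ≤ D : pick the optimal u₀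
    set u0 : ℂ := if c = 0 then 1 else (starRingEnd ℂ) c / (‖c‖ : ℂ) with hu0
    have hu0abs : ‖u0‖ = 1 := by
      rw [hu0]
      split_ifs with h
      · simp
      · rw [norm_div, Complex.norm_conj, Complex.norm_real, Real.norm_of_nonneg (norm_nonneg c),
          div_self (norm_ne_zero_iff.mpr h)]
    have hu0c : (u0 * c).re = ‖c‖ := by
      rw [hu0]
      split_ifs with h
      · simp [h]
      · rw [div_mul_eq_mul_div, mul_comm, Complex.mul_conj]
        rw [show ((Complex.normSq c : ℝ) : ℂ) / ((‖c‖ : ℝ) : ℂ)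
            = (((Complex.normSq c / ‖c‖ : ℝ)) : ℂ) by push_cast; ring]
        rw [Complex.ofReal_re, ← Complex.sq_norm, sq]
        rw [mul_div_assoc, div_self (norm_ne_zero_iff.mpr h), mul_one]
    refine le_trans (ciInf_le ⟨0, ?_⟩ (⟨u0, hu0abs⟩ : {c : ℂ // ‖c‖ = 1})) ?_
    · rintro r ⟨u, rfl⟩
      positivity
    · rw [hval u0 hu0abs, hu0c, ← Complex.sq_norm]
  · apply le_ciInf
    intro u
    rw [hval u.1 u.2]
    exact hDle u.1 u.2
lemma det_core {n : ℕ} (x y : Fin n → ℂ) (lam : ℝ) (hlam : lam ≠ 0) :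
    ((Matrix.vecMulVec x (star x) - Matrix.vecMulVec y (star y)
        - (lam : ℂ) • (1 : Matrix (Fin n) (Fin n) ℂ)).det = 0 ↔
      lam = (1 / 2) * ((∑ i, Complex.normSq (x i)) - (∑ i, Complex.normSq (y i))
          + Real.sqrt (((∑ i, Complex.normSq (x i)) + ∑ i, Complex.normSq (y i)) ^ 2
            - 4 * Complex.normSq (star x ⬝ᵥ y))) ∨
      lam = (1 / 2) * ((∑ i, Complex.normSq (x i)) - (∑ i, Complex.normSq (y i))
          - Real.sqrt (((∑ i, Complex.normSq (x i)) + ∑ i, Complex.normSq (y i)) ^ 2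
            - 4 * Complex.normSq (star x ⬝ᵥ y)))) := by
  set a := ∑ i, Complex.normSq (x i) with ha
  set b := ∑ i, Complex.normSq (y i) with hb
  set c := star x ⬝ᵥ y with hc
  have ha0 : 0 ≤ a := Finset.sum_nonneg fun i _ => Complex.normSq_nonneg _
  have hb0 : 0 ≤ b := Finset.sum_nonneg fun i _ => Complex.normSq_nonneg _
  have hcs : Complex.normSq c ≤ a * b := cs x y
  have hdsq0 : 0 ≤ (a + b)^2 - 4 * Complex.normSq c := by
    nlinarith [sq_nonneg (a - b), Complex.normSq_nonneg c]
  set Dr := Real.sqrt ((a + b)^2 - 4 * Complex.normSq c) with hDr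
  have hD2 : Dr^2 = (a + b)^2 - 4 * Complex.normSq c := Real.sq_sqrt hdsq0
  have hD2C : ((Dr:ℂ))^2 = ((a:ℂ)+(b:ℂ))^2 - 4*((Complex.normSq c : ℝ):ℂ) := by
    exact_mod_cast congrArg (fun t : ℝ => (t:ℂ)) hD2
  set l : ℂ := (lam : ℂ) with hl
  have hl0 : l ≠ 0 := Complex.ofReal_ne_zero.mpr hlam
  set A : Matrix (Fin n) (Fin 2) ℂ := Matrix.of fun i j => ![x i, y i] j with hA
  set B : Matrix (Fin 2) (Fin n) ℂ :=
    Matrix.of fun j i => ![(starRingEnd ℂ) (x i), -((starRingEnd ℂ) (y i))] j with hB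
  have hAB : A * B = Matrix.vecMulVec x (star x) - Matrix.vecMulVec y (star y) := by
    ext i j
    simp only [hA, hB, Matrix.mul_apply, Matrix.of_apply, Fin.sum_univ_two,
      Matrix.sub_apply, vecMulVec_apply, Pi.star_apply, Complex.star_def,
      Matrix.cons_val_zero, Matrix.cons_val_one, Matrix.head_cons]
    ring
  have hfact : Matrix.vecMulVec x (star x) - Matrix.vecMulVec y (star y) - l • 1
      = (-l) • (1 + A * ((-l)⁻¹ • B)) := by
    rw [Matrix.mul_smul, hAB, smul_add, smul_smul,
      mul_inv_cancel₀ (neg_ne_zero.mpr hl0), one_smul]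
    module
  have hBA : ((-l)⁻¹ • B) * A = (-l)⁻¹ • (B * A) := Matrix.smul_mul _ _ _
  have hBA00 : (B * A) 0 0 = (a:ℂ) := by
    simp only [hB, hA, Matrix.mul_apply, Matrix.of_apply, Matrix.cons_val_zero]
    rw [← dot_star_self x]
    simp [dotProduct]
  have hBA01 : (B * A) 0 1 = c := by
    simp only [hB, hA, Matrix.mul_apply, Matrix.of_apply, Matrix.cons_val_zero,
      Matrix.cons_val_one, Matrix.head_cons]
    rw [hc]
    simp [dotProduct]
  have hBA10 : (B * A) 1 0 = -((starRingEnd ℂ) c) := by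
    simp only [hB, hA, Matrix.mul_apply, Matrix.of_apply, Matrix.cons_val_zero,
      Matrix.cons_val_one, Matrix.head_cons]
    rw [show (starRingEnd ℂ) c = star y ⬝ᵥ x from (star_dot_comm x y).symm]
    simp [dotProduct]
  have hBA11 : (B * A) 1 1 = -(b:ℂ) := by
    simp only [hB, hA, Matrix.mul_apply, Matrix.of_apply, Matrix.cons_val_one,
      Matrix.head_cons]
    rw [← dot_star_self y]
    simp [dotProduct]
  have hdet : (Matrix.vecMulVec x (star x) - Matrix.vecMulVec y (star y) - l • 1).det
      = (-l)^n * ((1 + (-l)⁻¹ * (a:ℂ)) * (1 + (-l)⁻¹ * (-(b:ℂ)))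
          - ((-l)⁻¹ * c) * ((-l)⁻¹ * (-((starRingEnd ℂ) c)))) := by
    rw [hfact, Matrix.det_smul, Matrix.det_one_add_mul_comm, hBA]
    congr 1
    · simp [Fintype.card_fin]
    · rw [Matrix.det_fin_two]
      simp only [Matrix.add_apply, Matrix.smul_apply, Matrix.one_apply_eq, Matrix.one_apply_ne,
        smul_eq_mul, hBA00, hBA01, hBA10, hBA11, ne_eq]
      norm_num
  have hquad : ((Matrix.vecMulVec x (star x) - Matrix.vecMulVec y (star y) - l • 1).det = 0)
      ↔ l^2 - ((a:ℂ)-(b:ℂ))*l + (c * (starRingEnd ℂ) c - (a:ℂ)*(b:ℂ)) = 0 := by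
    rw [hdet, mul_eq_zero]
    constructor
    · rintro (h | h)
      · exact absurd h (pow_ne_zero _ (neg_ne_zero.mpr hl0))
      · have := congrArg (fun t => t * l^2) h
        simp only [zero_mul] at this
        rw [← this]
        field_simp [hl0]
        ring
    · intro h
      right
      have hexp : ((1 + (-l)⁻¹ * (a:ℂ)) * (1 + (-l)⁻¹ * (-(b:ℂ)))
          - ((-l)⁻¹ * c) * ((-l)⁻¹ * (-((starRingEnd ℂ) c)))) * l^2
          = l^2 - ((a:ℂ)-(b:ℂ))*l + (c * (starRingEnd ℂ) c - (a:ℂ)*(b:ℂ)) := by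
        field_simp [hl0]
        ring
      have := hexp.trans h
      exact (mul_eq_zero.mp this).resolve_right (pow_ne_zero _ hl0)
  rw [hquad]
  have hfac : l^2 - ((a:ℂ)-(b:ℂ))*l + (c * (starRingEnd ℂ) c - (a:ℂ)*(b:ℂ))
      = (l - (((1/2) * (a - b + Dr) : ℝ) : ℂ)) * (l - (((1/2) * (a - b - Dr) : ℝ) : ℂ)) := by
    rw [Complex.mul_conj]
    push_cast
    linear_combination ((1:ℂ)/4) * hD2C
  rw [hfac, mul_eq_zero, sub_eq_zero, sub_eq_zero, hl]
  constructor
  · rintro (h | h)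
    · exact Or.inl (Complex.ofReal_inj.mp h)
    · exact Or.inr (Complex.ofReal_inj.mp h)
  · rintro (h | h)
    · exact Or.inl (Complex.ofReal_inj.mpr h)
    · exact Or.inr (Complex.ofReal_inj.mpr h)
end AuxNRD


/-- for vectors `x, y ∈ ℂⁿ`,
`‖x x* − y y*‖₁ = sqrt((‖x‖² + ‖y‖²)² − 4|⟨x,y⟩_ℂ|²)`, which equals
`min_{u ∈ U(1)} ‖x − u y‖₂ ‖x + u y‖₂`; equivalently, the nonzero eigenvalues of
`x x* − y y*` are `λ± = ½(‖x‖² − ‖y‖² ± sqrt((‖x‖²+‖y‖²)² − 4|⟨x,y⟩_ℂ|²))`. -/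
theorem nuclear_rank_one_difference (n : ℕ) (x y : Fin n → ℂ) :
    nuclear (Matrix.vecMulVec x (star x) - Matrix.vecMulVec y (star y)) =
      Real.sqrt (((∑ i, Complex.normSq (x i)) + ∑ i, Complex.normSq (y i)) ^ 2
        - 4 * Complex.normSq (star x ⬝ᵥ y)) ∧
    nuclear (Matrix.vecMulVec x (star x) - Matrix.vecMulVec y (star y)) =
      (⨅ u : {c : ℂ // ‖c‖ = 1},
        Real.sqrt (∑ i, Complex.normSq (x i - u.1 * y i)) *
        Real.sqrt (∑ i, Complex.normSq (x i + u.1 * y i))) ∧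
    (∀ lam : ℝ, lam ≠ 0 →
      ((Matrix.vecMulVec x (star x) - Matrix.vecMulVec y (star y)
          - (lam : ℂ) • (1 : Matrix (Fin n) (Fin n) ℂ)).det = 0 ↔
        lam = (1 / 2) * ((∑ i, Complex.normSq (x i)) - (∑ i, Complex.normSq (y i))
            + Real.sqrt (((∑ i, Complex.normSq (x i)) + ∑ i, Complex.normSq (y i)) ^ 2
              - 4 * Complex.normSq (star x ⬝ᵥ y))) ∨
        lam = (1 / 2) * ((∑ i, Complex.normSq (x i)) - (∑ i, Complex.normSq (y i))
            - Real.sqrt (((∑ i, Complex.normSq (x i)) + ∑ i, Complex.normSq (y i)) ^ 2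
              - 4 * Complex.normSq (star x ⬝ᵥ y))))) := by
  refine ⟨nuclear_core x y, ?_, fun lam hlam => det_core x y lam hlam⟩
  rw [nuclear_core x y]
  exact (inf_core x y).symm
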